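/- arXiv:2103.03323 — 8 statements merged into one kernel-verified Lean document; each statement's English description precedes it below -/
import Mathlib

section
/- Let Z_1,...,Z_{m+1} be exchangeable random variables taking values in [0,1]. For any β ∈ (0,1), the probability that Z_{m+1} is at most the β-quantile of the empirical distribution placing mass 1/(m+1) on each of Z_1,...,Z_m and on the point 1, is at least β. -/
open Finset

/-- Pigeonhole: at least k indices j have fewer than k indices i with v i < v j. -/
lemma key_count {n k : ℕ} (hk1 : 1 ≤ k) (hkn : k ≤ n) (v : Fin n → ℝ) :
    k ≤ (Finset.univ.filter fun j => (Finset.univ.filter fun i => v i < v j).card < k).card := by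
  have hn : 0 < n := lt_of_lt_of_le hk1 hkn
  have hne : (Finset.univ : Finset (Fin n)).Nonempty := by
    simpa [Finset.univ_nonempty_iff] using Fin.pos_iff_nonempty.mp hn
  set F := Finset.univ.filter fun j : Fin n => k ≤ (Finset.univ.filter fun i => v i ≤ v j).card with hF
  have hFne : F.Nonempty := by
    obtain ⟨j, -, hj⟩ := Finset.exists_max_image Finset.univ v hne
    refine ⟨j, ?_⟩
    simp only [hF, Finset.mem_filter, Finset.mem_univ, true_and]
    have : (Finset.univ.filter fun i => v i ≤ v j) = Finset.univ := by
      apply Finset.filter_true_of_mem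
      intro i _; exact hj i (Finset.mem_univ i)
    rw [this, Finset.card_univ, Fintype.card_fin]; exact hkn
  obtain ⟨j0, hj0F, hj0min⟩ := Finset.exists_min_image F v hFne
  set c := v j0 with hc
  have hcge : k ≤ (Finset.univ.filter fun i => v i ≤ c).card := by
    have := (Finset.mem_filter.mp hj0F).2
    simpa [hc] using this
  have hlt : (Finset.univ.filter fun i => v i < c).card < k := by
    by_contra h
    push_neg at h
    have hne2 : (Finset.univ.filter fun i => v i < c).Nonempty := by
      rw [← Finset.card_pos]; omega
    obtain ⟨j1, hj1mem, hj1⟩ := Finset.exists_max_image _ v hne2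
    have hj1F : j1 ∈ F := by
      simp only [hF, Finset.mem_filter, Finset.mem_univ, true_and]
      refine le_trans h (Finset.card_le_card ?_)
      intro i hi
      simp only [Finset.mem_filter, Finset.mem_univ, true_and] at hi ⊢
      exact hj1 i (by simp [Finset.mem_filter, hi])
    have h1 := hj0min j1 hj1F
    have h2 : v j1 < c := (Finset.mem_filter.mp hj1mem).2
    exact absurd h1 (not_le.mpr h2)
  refine le_trans hcge (Finset.card_le_card ?_)
  intro j hj
  simp only [Finset.mem_filter, Finset.mem_univ, true_and] at hj ⊢
  refine lt_of_le_of_lt (Finset.card_le_card ?_) hlt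
  intro i hi
  simp only [Finset.mem_filter, Finset.mem_univ, true_and] at hi ⊢
  exact lt_of_lt_of_le hi hj

/-- Pointwise characterization of membership in the coverage event. -/
lemma quantile_iff (m : ℕ) (β : ℝ) (hβ0 : 0 < β) (hβ1 : β < 1)
    (w : Fin m → ℝ) (z : ℝ) (hw : ∀ i, w i ∈ Set.Icc (0:ℝ) 1) (hz : z ∈ Set.Icc (0:ℝ) 1) :
    (z ≤ sInf {t : ℝ | β ≤ (((Finset.univ.filter fun i : Fin m => w i ≤ t).card : ℝ)
            + (if (1 : ℝ) ≤ t then 1 else 0)) / (m + 1)}) ↔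
      (Finset.univ.filter fun i : Fin m => w i < z).card < ⌈β * (m + 1)⌉₊ := by
  set k := ⌈β * (m + 1)⌉₊ with hk
  set count : ℝ → ℕ := fun t =>
    (Finset.univ.filter fun i : Fin m => w i ≤ t).card + (if (1:ℝ) ≤ t then 1 else 0) with hcount
  have hm1 : (0:ℝ) < (m:ℝ) + 1 := by positivity
  have hSeq : {t : ℝ | β ≤ (((Finset.univ.filter fun i : Fin m => w i ≤ t).card : ℝ)
            + (if (1 : ℝ) ≤ t then 1 else 0)) / (m + 1)} = {t : ℝ | k ≤ count t} := by
    ext t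
    simp only [Set.mem_setOf_eq, le_div_iff₀ hm1, hk, hcount]
    rw [Nat.ceil_le]
    push_cast
    constructor <;> intro h <;> [skip; skip] <;> linarith [le_of_eq (rfl : (0:ℝ) = 0)]
  have hk1 : 1 ≤ k := by
    rw [hk]
    exact Nat.one_le_ceil_iff.mpr (by positivity)
  have hkm : k ≤ m + 1 := by
    rw [hk]
    have : β * ((m:ℝ) + 1) ≤ (m:ℝ) + 1 := by nlinarith
    calc ⌈β * ((m:ℝ)+1)⌉₊ ≤ ⌈(m:ℝ)+1⌉₊ := Nat.ceil_le_ceil this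
      _ = m + 1 := by rw [← Nat.cast_one, ← Nat.cast_add, Nat.ceil_natCast]
  have h1S : (1:ℝ) ∈ {t : ℝ | k ≤ count t} := by
    simp only [Set.mem_setOf_eq, hcount]
    have : (Finset.univ.filter fun i : Fin m => w i ≤ (1:ℝ)) = Finset.univ := by
      apply Finset.filter_true_of_mem; intro i _; exact (hw i).2
    rw [this, if_pos le_rfl, Finset.card_univ, Fintype.card_fin]
    exact hkm
  have hbdd : BddBelow {t : ℝ | k ≤ count t} := by
    refine ⟨0, fun t ht => ?_⟩
    by_contra hneg
    push_neg at hneg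
    simp only [Set.mem_setOf_eq, hcount] at ht
    have he : (Finset.univ.filter fun i : Fin m => w i ≤ t) = ∅ := by
      apply Finset.filter_false_of_mem
      intro i _
      exact not_le.mpr (lt_of_lt_of_le hneg (hw i).1)
    rw [he, if_neg (by linarith)] at ht
    simp at ht; omega
  rw [hSeq]
  constructor
  · intro hle
    by_contra hcon
    push_neg at hcon
    have hfne : (Finset.univ.filter fun i : Fin m => w i < z).Nonempty := by
      rw [← Finset.card_pos]; omega
    set t := ((Finset.univ.filter fun i : Fin m => w i < z).image w).max'
      (hfne.image w) with ht
    have htmem := Finset.max'_mem _ (hfne.image w)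
    rw [Finset.mem_image] at htmem
    obtain ⟨i0, hi0, hti0⟩ := htmem
    have htz : t < z := by
      rw [ht, ← hti0]; exact (Finset.mem_filter.mp hi0).2
    have htS : t ∈ {t : ℝ | k ≤ count t} := by
      simp only [Set.mem_setOf_eq, hcount]
      have hsub : (Finset.univ.filter fun i : Fin m => w i < z)
          ⊆ (Finset.univ.filter fun i : Fin m => w i ≤ t) := by
        intro i hi
        simp only [Finset.mem_filter, Finset.mem_univ, true_and] at hi ⊢
        exact Finset.le_max' _ _ (Finset.mem_image_of_mem w (by
          simp [Finset.mem_filter, hi]))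
      have := Finset.card_le_card hsub
      omega
    have := csInf_le hbdd htS
    linarith
  · intro hcard
    apply le_csInf ⟨1, h1S⟩
    intro t htS
    by_contra hneg
    push_neg at hneg
    simp only [Set.mem_setOf_eq, hcount] at htS
    have hite : ¬ (1:ℝ) ≤ t := by
      intro h; linarith [hz.2]
    rw [if_neg hite] at htS
    have hsub : (Finset.univ.filter fun i : Fin m => w i ≤ t)
        ⊆ (Finset.univ.filter fun i : Fin m => w i < z) := by
      intro i hi
      simp only [Finset.mem_filter, Finset.mem_univ, true_and] at hi ⊢
      linarith
    have := Finset.card_le_card hsub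
    omega

open MeasureTheory ProbabilityTheory
open scoped ENNReal

/-- For exchangeable [0,1]-valued random variables Z_1,...,Z_{m+1},
the probability that Z_{m+1} is at most the β-quantile of the empirical
distribution on {Z_1,...,Z_m} ∪ {1} is at least β. -/
theorem conformal_coverage_lower_bound
    {Ω : Type*} [MeasurableSpace Ω] (μ : Measure Ω) [IsProbabilityMeasure μ]
    (m : ℕ) (Z : Fin (m + 1) → Ω → ℝ)
    (hmeas : ∀ i, Measurable (Z i))
    (hrange : ∀ i ω, Z i ω ∈ Set.Icc (0 : ℝ) 1)
    (hexch : ∀ σ : Equiv.Perm (Fin (m + 1)),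
      Measure.map (fun ω => fun i => Z (σ i) ω) μ = Measure.map (fun ω => fun i => Z i ω) μ)
    (β : ℝ) (hβ : β ∈ Set.Ioo (0 : ℝ) 1) :
    ENNReal.ofReal β ≤
      μ {ω | Z (Fin.last m) ω ≤
        sInf {t : ℝ | β ≤ (((Finset.univ.filter fun i : Fin m => Z i.castSucc ω ≤ t).card : ℝ)
            + (if (1 : ℝ) ≤ t then 1 else 0)) / (m + 1)}} := by
  obtain ⟨hβ0, hβ1⟩ := hβ
  set k := ⌈β * ((m:ℝ) + 1)⌉₊ with hk
  have hk1 : 1 ≤ k := Nat.one_le_ceil_iff.mpr (by positivity)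
  have hkm : k ≤ m + 1 := by
    have : β * ((m:ℝ) + 1) ≤ (m:ℝ) + 1 := by nlinarith
    calc k ≤ ⌈(m:ℝ)+1⌉₊ := Nat.ceil_le_ceil this
      _ = m + 1 := by rw [← Nat.cast_one, ← Nat.cast_add, Nat.ceil_natCast]
  -- vector map
  set Zvec : Ω → (Fin (m+1) → ℝ) := fun ω i => Z i ω with hZvec
  have hZvecMeas : Measurable Zvec := measurable_pi_lambda _ hmeas
  -- the sets B j
  set B : Fin (m+1) → Set (Fin (m+1) → ℝ) := fun j =>
    {v | (Finset.univ.filter fun i => v i < v j).card < k} with hB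
  have hBmeas : ∀ j, MeasurableSet (B j) := by
    intro j
    have hg : Measurable fun v : Fin (m+1) → ℝ =>
        (Finset.univ.filter fun i => v i < v j).card := by
      simp only [Finset.card_filter]
      exact Finset.measurable_sum _ fun i _ =>
        Measurable.ite (measurableSet_lt (measurable_pi_apply i) (measurable_pi_apply j))
          measurable_const measurable_const
    exact hg (measurableSet_Iio : MeasurableSet (Set.Iio k))
  -- equal measures
  have hMapEq : ∀ j, μ (Zvec ⁻¹' B j) = μ (Zvec ⁻¹' B (Fin.last m)) := by
    intro j
    set σ : Equiv.Perm (Fin (m+1)) := Equiv.swap j (Fin.last m) with hσ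
    have hperm : Measurable fun v : Fin (m+1) → ℝ => v ∘ σ :=
      measurable_pi_lambda _ fun i => measurable_pi_apply (σ i)
    have hBrel : (fun v : Fin (m+1) → ℝ => v ∘ σ) ⁻¹' B (Fin.last m) = B j := by
      ext v
      simp only [hB, Set.mem_preimage, Set.mem_setOf_eq, Function.comp_apply]
      have hσlast : σ (Fin.last m) = j := Equiv.swap_apply_right j (Fin.last m)
      simp only [hσlast]
      have hcv : (Finset.univ.filter fun i => v (σ i) < v j).card
          = (Finset.univ.filter fun i => v i < v j).card := by
        rw [Finset.card_filter, Finset.card_filter]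
        exact Equiv.sum_comp σ (fun i => if v i < v j then 1 else 0)
      rw [hcv]
    calc μ (Zvec ⁻¹' B j)
        = Measure.map Zvec μ (B j) := (Measure.map_apply hZvecMeas (hBmeas j)).symm
      _ = Measure.map Zvec μ ((fun v => v ∘ σ) ⁻¹' B (Fin.last m)) := by rw [hBrel]
      _ = Measure.map (fun v => v ∘ σ) (Measure.map Zvec μ) (B (Fin.last m)) :=
          (Measure.map_apply hperm (hBmeas (Fin.last m))).symm
      _ = Measure.map ((fun v : Fin (m+1) → ℝ => v ∘ σ) ∘ Zvec) μ (B (Fin.last m)) := by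
          rw [Measure.map_map hperm hZvecMeas]
      _ = Measure.map (fun ω => fun i => Z (σ i) ω) μ (B (Fin.last m)) := rfl
      _ = Measure.map Zvec μ (B (Fin.last m)) := by rw [hexch σ]
      _ = μ (Zvec ⁻¹' B (Fin.last m)) := Measure.map_apply hZvecMeas (hBmeas (Fin.last m))
  -- pointwise counting bound
  have hpt : ∀ ω, (k : ℝ≥0∞) ≤
      ∑ j : Fin (m+1), Set.indicator (Zvec ⁻¹' B j) (fun _ => (1:ℝ≥0∞)) ω := by
    intro ω
    have h1 : ∑ j : Fin (m+1), Set.indicator (Zvec ⁻¹' B j) (fun _ => (1:ℝ≥0∞)) ω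
        = ((Finset.univ.filter fun j => Zvec ω ∈ B j).card : ℝ≥0∞) := by
      rw [Finset.card_filter]
      push_cast
      refine Finset.sum_congr rfl fun j _ => ?_
      by_cases h : Zvec ω ∈ B j <;> simp [Set.indicator_apply, Set.mem_preimage, h]
    rw [h1]
    have := key_count hk1 hkm (Zvec ω)
    exact_mod_cast this
  -- integrate
  have hsum : (k : ℝ≥0∞) ≤ ((m:ℝ≥0∞) + 1) * μ (Zvec ⁻¹' B (Fin.last m)) := by
    have h2 : (k : ℝ≥0∞) = ∫⁻ _, (k : ℝ≥0∞) ∂μ := by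
      rw [lintegral_const, measure_univ, mul_one]
    have h3 : (∫⁻ ω, (k : ℝ≥0∞) ∂μ) ≤
        ∫⁻ ω, ∑ j : Fin (m+1), Set.indicator (Zvec ⁻¹' B j) (fun _ => (1:ℝ≥0∞)) ω ∂μ :=
      lintegral_mono hpt
    have h4 : (∫⁻ ω, ∑ j : Fin (m+1), Set.indicator (Zvec ⁻¹' B j) (fun _ => (1:ℝ≥0∞)) ω ∂μ)
        = ∑ j : Fin (m+1), μ (Zvec ⁻¹' B j) := by
      rw [lintegral_finset_sum]
      · exact Finset.sum_congr rfl fun j _ =>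
          lintegral_indicator_one (hZvecMeas (hBmeas j))
      · exact fun j _ => (measurable_const.indicator (hZvecMeas (hBmeas j)))
    have h5 : ∑ j : Fin (m+1), μ (Zvec ⁻¹' B j)
        = ((m:ℝ≥0∞) + 1) * μ (Zvec ⁻¹' B (Fin.last m)) := by
      rw [Finset.sum_congr rfl fun j _ => hMapEq j]
      rw [Finset.sum_const, Finset.card_univ, Fintype.card_fin, nsmul_eq_mul]
      push_cast
      ring
    rw [h2]
    calc (∫⁻ _, (k : ℝ≥0∞) ∂μ) ≤ _ := h3
      _ = _ := h4
      _ = _ := h5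
  -- identify the target set
  have hset : {ω | Z (Fin.last m) ω ≤
        sInf {t : ℝ | β ≤ (((Finset.univ.filter fun i : Fin m => Z i.castSucc ω ≤ t).card : ℝ)
            + (if (1 : ℝ) ≤ t then 1 else 0)) / (m + 1)}}
      = Zvec ⁻¹' B (Fin.last m) := by
    ext ω
    simp only [Set.mem_setOf_eq, Set.mem_preimage, hB, hZvec]
    rw [quantile_iff m β hβ0 hβ1 (fun i => Z i.castSucc ω) (Z (Fin.last m) ω)
      (fun i => hrange i.castSucc ω) (hrange (Fin.last m) ω)]
    have hcards : (Finset.univ.filter fun i : Fin (m+1) => Z i ω < Z (Fin.last m) ω).card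
        = (Finset.univ.filter fun i : Fin m => Z i.castSucc ω < Z (Fin.last m) ω).card := by
      rw [Finset.card_filter, Finset.card_filter, Fin.sum_univ_castSucc]
      simp
    rw [← hk, hcards]
  rw [hset]
  -- conclude
  have hdiv : (k : ℝ≥0∞) / ((m:ℝ≥0∞) + 1) ≤ μ (Zvec ⁻¹' B (Fin.last m)) := by
    rw [ENNReal.div_le_iff_le_mul (Or.inl (by simp)) (Or.inl (by simp))]
    rwa [mul_comm] at hsum
  refine le_trans ?_ hdiv
  have hβk : β ≤ (k:ℝ) / ((m:ℝ) + 1) := by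
    rw [le_div_iff₀ (by positivity : (0:ℝ) < (m:ℝ)+1)]
    exact Nat.le_ceil _
  calc ENNReal.ofReal β ≤ ENNReal.ofReal ((k:ℝ) / ((m:ℝ) + 1)) := ENNReal.ofReal_le_ofReal hβk
    _ = (k : ℝ≥0∞) / ((m:ℝ≥0∞) + 1) := by
        rw [ENNReal.ofReal_div_of_pos (by positivity)]
        norm_num [ENNReal.ofReal_natCast]
        rw [← ENNReal.ofReal_natCast m, ← ENNReal.ofReal_one, ← ENNReal.ofReal_add] <;> simp
end

section
/- Let Z_1,...,Z_{m+1} be exchangeable random variables taking values in [0,1] that are almost surely pairwise distinct. For any β ∈ (0,1), the probability that Z_{m+1} is at most the β-quantile of the empirical distribution on {Z_1,...,Z_m} ∪ {1} is at most β + 1/(m+1). -/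
open MeasureTheory ProbabilityTheory
open scoped ENNReal

private lemma card_filter_comp_perm {α : Type*} [Fintype α] [DecidableEq α]
    (σ : Equiv.Perm α) (p : α → Prop) [DecidablePred p] :
    (Finset.univ.filter fun i => p (σ i)).card = (Finset.univ.filter p).card := by
  rw [← Fintype.card_subtype, ← Fintype.card_subtype]
  exact Fintype.card_congr (σ.subtypeEquiv fun a => Iff.rfl)

private lemma cnt_lt {n : ℕ} (v : Fin n → ℝ) {j j' : Fin n} (h : v j < v j') :
    (Finset.univ.filter fun i => v i < v j).card
      < (Finset.univ.filter fun i => v i < v j').card := by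
  apply Finset.card_lt_card
  rw [Finset.ssubset_iff_of_subset (by
    intro i hi
    simp only [Finset.mem_filter, Finset.mem_univ, true_and] at hi ⊢
    exact hi.trans h)]
  exact ⟨j, by simp [h], by simp⟩

private lemma cnt_inj {n : ℕ} (v : Fin n → ℝ) (hv : Function.Injective v) :
    Function.Injective fun j => (Finset.univ.filter fun i => v i < v j).card := by
  intro j j' h
  by_contra hne
  rcases lt_or_gt_of_ne (fun hvv => hne (hv hvv)) with h' | h'
  · exact absurd h (ne_of_lt (cnt_lt v h'))
  · exact absurd h.symm (ne_of_lt (cnt_lt v h'))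

private lemma cnt_card_bound {n : ℕ} (v : Fin n → ℝ) (hv : Function.Injective v) (k : ℕ) :
    (Finset.univ.filter fun j => (Finset.univ.filter fun i => v i < v j).card < k).card ≤ k := by
  calc (Finset.univ.filter fun j => (Finset.univ.filter fun i => v i < v j).card < k).card
      ≤ (Finset.range k).card := by
        apply Finset.card_le_card_of_injOn (fun j => (Finset.univ.filter fun i => v i < v j).card)
        · intro j hj
          exact Finset.mem_range.mpr (Finset.mem_filter.mp hj).2
        · exact ((cnt_inj v hv).injOn)
    _ = k := Finset.card_range k

/-- For exchangeable, a.s. distinct [0,1]-valued random variables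
Z_1,...,Z_{m+1}, the probability that Z_{m+1} is at most the β-quantile of the
empirical distribution on {Z_1,...,Z_m} ∪ {1} is at most β + 1/(m+1). -/
theorem conformal_coverage_upper_bound
    {Ω : Type*} [MeasurableSpace Ω] (μ : Measure Ω) [IsProbabilityMeasure μ]
    (m : ℕ) (Z : Fin (m + 1) → Ω → ℝ)
    (hmeas : ∀ i, Measurable (Z i))
    (hrange : ∀ i ω, Z i ω ∈ Set.Icc (0 : ℝ) 1)
    (hexch : ∀ σ : Equiv.Perm (Fin (m + 1)),
      Measure.map (fun ω => fun i => Z (σ i) ω) μ = Measure.map (fun ω => fun i => Z i ω) μ)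
    (hdist : ∀ i j, i ≠ j → μ {ω | Z i ω = Z j ω} = 0)
    (β : ℝ) (hβ : β ∈ Set.Ioo (0 : ℝ) 1) :
    μ {ω | Z (Fin.last m) ω ≤
        sInf {t : ℝ | β ≤ (((Finset.univ.filter fun i : Fin m => Z i.castSucc ω ≤ t).card : ℝ)
            + (if (1 : ℝ) ≤ t then 1 else 0)) / (m + 1)}} ≤
      ENNReal.ofReal (β + 1 / (m + 1)) := by
  classical
  obtain ⟨hβ0, hβ1⟩ := hβ
  have hmpos : (0:ℝ) < (m:ℝ) + 1 := by positivity
  set k : ℕ := ⌈β * ((m:ℝ)+1)⌉₊ with hk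
  have hkpos : 1 ≤ k := Nat.one_le_ceil_iff.mpr (by positivity)
  have hkle : (k:ℝ) ≤ β * ((m:ℝ)+1) + 1 := le_of_lt (Nat.ceil_lt_add_one (by positivity))
  have hβk : β * ((m:ℝ) + 1) ≤ (k:ℝ) := Nat.le_ceil _
  set cnt : (Fin (m+1) → ℝ) → Fin (m+1) → ℕ :=
    fun v j => (Finset.univ.filter fun i => v i < v j).card with hcnt
  have hcnt_meas : ∀ j, Measurable fun v => cnt v j := by
    intro j
    have he : (fun v => cnt v j) = fun v => ∑ i : Fin (m+1), if v i < v j then 1 else 0 := by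
      funext v
      show (Finset.univ.filter fun i => v i < v j).card = _
      rw [Finset.card_filter]
    rw [he]
    exact Finset.measurable_sum _ fun i _ =>
      Measurable.ite (measurableSet_lt (measurable_pi_apply i) (measurable_pi_apply j))
        measurable_const measurable_const
  set Zvec : Ω → (Fin (m+1) → ℝ) := fun ω i => Z i ω with hZvec
  have hZvec_meas : Measurable Zvec := measurable_pi_lambda _ hmeas
  set A : Fin (m+1) → Set Ω := fun j => {ω | cnt (Zvec ω) j < k} with hA
  have hA_meas : ∀ j, MeasurableSet (A j) :=
    fun j => ((hcnt_meas j).comp hZvec_meas) measurableSet_Iio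
  -- exchangeability: all A j have the same measure
  have hABeq : ∀ j, μ (A j) = μ (A (Fin.last m)) := by
    intro j
    have hS : MeasurableSet {v : Fin (m+1) → ℝ | cnt v (Fin.last m) < k} :=
      (hcnt_meas (Fin.last m)) measurableSet_Iio
    set σ : Equiv.Perm (Fin (m+1)) := Equiv.swap j (Fin.last m) with hσ
    have h1 : Measure.map (fun ω => fun i => Z (σ i) ω) μ {v | cnt v (Fin.last m) < k}
        = Measure.map Zvec μ {v | cnt v (Fin.last m) < k} := by rw [hexch σ]
    rw [Measure.map_apply (measurable_pi_lambda _ fun i => hmeas (σ i)) hS,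
        Measure.map_apply hZvec_meas hS] at h1
    have key : ∀ ω : Ω, cnt (fun i => Z (σ i) ω) (Fin.last m) = cnt (Zvec ω) j := by
      intro ω
      show (Finset.univ.filter fun i => Z (σ i) ω < Z (σ (Fin.last m)) ω).card
          = (Finset.univ.filter fun i => Z i ω < Z j ω).card
      rw [Equiv.swap_apply_right]
      exact card_filter_comp_perm σ (fun i => Z i ω < Z j ω)
    have hset : ((fun ω => fun i => Z (σ i) ω) ⁻¹' {v | cnt v (Fin.last m) < k}) = A j := by
      ext ω
      simp only [Set.mem_preimage, Set.mem_setOf_eq, hA, key ω]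
    rw [hset] at h1
    exact h1
  -- a.e. injectivity
  have hae : ∀ᵐ ω ∂μ, Function.Injective (Zvec ω) := by
    have h : ∀ᵐ ω ∂μ, ∀ i j : Fin (m+1), i ≠ j → Z i ω ≠ Z j ω := by
      rw [ae_all_iff]
      intro i
      rw [ae_all_iff]
      intro j
      by_cases hij : i = j
      · filter_upwards with ω h
        exact absurd hij h
      · rw [ae_iff]
        apply measure_mono_null _ (hdist i j hij)
        intro ω hω
        simp only [Set.mem_setOf_eq] at hω ⊢
        push_neg at hω
        exact hω.2
    filter_upwards [h] with ω hω
    intro a b hab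
    by_contra hne
    exact hω a b hne hab
  -- sum bound
  have hsum : ((m:ℝ≥0∞)+1) * μ (A (Fin.last m)) ≤ (k : ℝ≥0∞) := by
    have h1 : ∑ j : Fin (m+1), μ (A j) = ((m:ℝ≥0∞)+1) * μ (A (Fin.last m)) := by
      rw [Finset.sum_congr rfl fun j _ => hABeq j, Finset.sum_const, Finset.card_univ,
        Fintype.card_fin, nsmul_eq_mul]
      push_cast
      ring
    rw [← h1]
    have h2 : ∫⁻ ω, (∑ j : Fin (m+1), (A j).indicator (1 : Ω → ℝ≥0∞) ω) ∂μ
        = ∑ j : Fin (m+1), μ (A j) :=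
      (lintegral_finset_sum (f := fun j => (A j).indicator (1 : Ω → ℝ≥0∞)) Finset.univ
        (fun j _ => measurable_const.indicator (hA_meas j))).trans
        (Finset.sum_congr rfl fun j _ => lintegral_indicator_one (hA_meas j))
    rw [← h2]
    have h3 : ∀ᵐ ω ∂μ, (∑ j : Fin (m+1), (A j).indicator (1 : Ω → ℝ≥0∞) ω) ≤ (k:ℝ≥0∞) := by
      filter_upwards [hae] with ω hω
      have he : (∑ j : Fin (m+1), (A j).indicator (1 : Ω → ℝ≥0∞) ω)
          = ((Finset.univ.filter fun j : Fin (m+1) => cnt (Zvec ω) j < k).card : ℝ≥0∞) := by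
        rw [Finset.card_filter, Nat.cast_sum]
        apply Finset.sum_congr rfl
        intro j _
        by_cases h : cnt (Zvec ω) j < k
        · rw [Set.indicator_of_mem (by simpa [hA] using h), if_pos h]
          simp
        · rw [Set.indicator_of_notMem (by simpa [hA] using h), if_neg h]
          simp
      rw [he]
      exact Nat.cast_le.mpr (cnt_card_bound (Zvec ω) hω k)
    calc ∫⁻ ω, (∑ j : Fin (m+1), (A j).indicator (1 : Ω → ℝ≥0∞) ω) ∂μ
        ≤ ∫⁻ _, (k:ℝ≥0∞) ∂μ := lintegral_mono_ae h3
      _ = (k:ℝ≥0∞) := by simp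
  -- event inclusion
  have hE : {ω | Z (Fin.last m) ω ≤
        sInf {t : ℝ | β ≤ (((Finset.univ.filter fun i : Fin m => Z i.castSucc ω ≤ t).card : ℝ)
            + (if (1 : ℝ) ≤ t then 1 else 0)) / (m + 1)}} ⊆ A (Fin.last m) := by
    intro ω hω
    simp only [Set.mem_setOf_eq] at hω
    by_contra hcon
    have hcon' : k ≤ cnt (Zvec ω) (Fin.last m) := by
      simp only [hA, Set.mem_setOf_eq, not_lt] at hcon
      exact hcon
    set s : Finset (Fin (m+1)) := Finset.univ.filter fun i => Z i ω < Z (Fin.last m) ω with hs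
    have hscard : k ≤ s.card := hcon'
    have hsne : (s.image fun i => Z i ω).Nonempty := by
      apply Finset.image_nonempty.mpr
      rw [← Finset.card_pos]
      omega
    obtain ⟨i0, hi0, hti0⟩ := Finset.mem_image.mp ((s.image fun i => Z i ω).max'_mem hsne)
    set t : ℝ := Z i0 ω with ht
    have htlt : t < Z (Fin.last m) ω := (Finset.mem_filter.mp hi0).2
    have htle : ∀ i ∈ s, Z i ω ≤ t := by
      intro i hi
      rw [hti0]
      exact Finset.le_max' (s.image fun i => Z i ω) (Z i ω) (Finset.mem_image_of_mem _ hi)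
    set s' : Finset (Fin m) := Finset.univ.filter fun i => Z i.castSucc ω ≤ t with hs'
    have hcard : s.card ≤ s'.card := by
      rw [← Finset.card_map ⟨Fin.castSucc, Fin.castSucc_injective m⟩ (s := s')]
      apply Finset.card_le_card
      intro i hi
      have hine : i ≠ Fin.last m := by
        intro h
        rw [h] at hi
        exact absurd (Finset.mem_filter.mp hi).2 (lt_irrefl _)
      obtain ⟨i', hi'⟩ := Fin.exists_castSucc_eq.mpr hine
      rw [Finset.mem_map]
      refine ⟨i', Finset.mem_filter.mpr ⟨Finset.mem_univ _, ?_⟩, hi'⟩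
      rw [hi']
      exact htle i hi
    have htmem : t ∈ {t : ℝ | β ≤ (((Finset.univ.filter fun i : Fin m => Z i.castSucc ω ≤ t).card : ℝ)
        + (if (1 : ℝ) ≤ t then 1 else 0)) / (m + 1)} := by
      simp only [Set.mem_setOf_eq]
      rw [le_div_iff₀ hmpos]
      have h0 : (0:ℝ) ≤ (if (1 : ℝ) ≤ t then 1 else 0) := by positivity
      have hh : β * ((m:ℝ)+1) ≤ (s'.card : ℝ) := by
        refine hβk.trans ?_
        exact_mod_cast hscard.trans hcard
      have : ((Finset.univ.filter fun i : Fin m => Z i.castSucc ω ≤ t).card : ℝ) = (s'.card : ℝ) := by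
        rw [hs']
      linarith
    have hbdd : BddBelow {t : ℝ | β ≤ (((Finset.univ.filter fun i : Fin m => Z i.castSucc ω ≤ t).card : ℝ)
        + (if (1 : ℝ) ≤ t then 1 else 0)) / (m + 1)} := by
      refine ⟨0, fun u hu => ?_⟩
      by_contra hu0
      push_neg at hu0
      simp only [Set.mem_setOf_eq] at hu
      have h1 : (Finset.univ.filter fun i : Fin m => Z i.castSucc ω ≤ u) = ∅ := by
        apply Finset.filter_eq_empty_iff.mpr
        intro i _
        push_neg
        exact lt_of_lt_of_le hu0 (hrange _ ω).1
      rw [h1, if_neg (by linarith)] at hu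
      simp only [Finset.card_empty, Nat.cast_zero, add_zero, zero_div] at hu
      linarith
    have hinf := csInf_le hbdd htmem
    linarith [hω.trans hinf]
  -- conclusion
  refine (measure_mono hE).trans ?_
  have hne : ((m:ℝ≥0∞)+1) ≠ 0 := by simp
  have hnt : ((m:ℝ≥0∞)+1) ≠ ⊤ := by simp [ENNReal.add_ne_top]
  rw [← ENNReal.mul_le_mul_iff_right hne hnt]
  refine hsum.trans ?_
  have h1 : ((m:ℝ≥0∞)+1) = ENNReal.ofReal ((m:ℝ)+1) := by
    rw [ENNReal.ofReal_add (by positivity) (by norm_num), ENNReal.ofReal_natCast,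
      ENNReal.ofReal_one]
  rw [h1, ← ENNReal.ofReal_mul (by positivity), ← ENNReal.ofReal_natCast k]
  apply ENNReal.ofReal_le_ofReal
  have : ((m:ℝ)+1) * (β + 1/((m:ℝ)+1)) = β * ((m:ℝ)+1) + 1 := by
    field_simp
  rw [this]
  exact hkle
end

section
/- Suppose the label shift assumption holds: distributions P and Q on X×Y (Y finite) satisfy Q(X ∈ A | Y = y) = P(X ∈ A | Y = y) for all measurable A and all y with q(y) > 0, where p(y) = P(Y=y), q(y) = Q(Y=y), and q(y) > 0 ⟹ p(y) > 0. Let f : X → S be measurable with values in a measurable space and B a measurable subset of S with P(f(X) ∈ B) > 0 and Q(f(X) ∈ B) > 0. Define w(y) = q(y)/p(y), π^P_{y} = P(Y=y | f(X) ∈ B), π^Q_{y} = Q(Y=y | f(X) ∈ B). Then for every label y: π^Q_{y} = w(y)·π^P_{y} / Σ_{k} w(k)·π^P_{k}. -/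
open MeasureTheory

/-- Proposition 1: under label shift, the bin-conditional class
probabilities on the target satisfy π^Q_y = w(y)π^P_y / Σ_k w(k)π^P_k. -/
theorem label_shift_bin_correction
    {𝒳 S : Type*} [MeasurableSpace 𝒳] [MeasurableSpace S]
    (K : ℕ) (P Q : Measure (𝒳 × Fin K)) [IsProbabilityMeasure P] [IsProbabilityMeasure Q]
    (f : 𝒳 → S) (hf : Measurable f) (B : Set S) (hB : MeasurableSet B)
    (pl ql : Fin K → ℝ)
    (hpl : ∀ y, pl y = (P {z | z.2 = y}).toReal)
    (hql : ∀ y, ql y = (Q {z | z.2 = y}).toReal)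
    (hsupp : ∀ y, 0 < ql y → 0 < pl y)
    (hshift : ∀ A : Set 𝒳, MeasurableSet A → ∀ y, 0 < ql y →
      (Q {z | z.1 ∈ A ∧ z.2 = y}).toReal / ql y = (P {z | z.1 ∈ A ∧ z.2 = y}).toReal / pl y)
    (hPB : 0 < (P {z | f z.1 ∈ B}).toReal) (hQB : 0 < (Q {z | f z.1 ∈ B}).toReal)
    (w πP πQ : Fin K → ℝ)
    (hw : ∀ y, w y = ql y / pl y)
    (hπP : ∀ y, πP y = (P {z | f z.1 ∈ B ∧ z.2 = y}).toReal / (P {z | f z.1 ∈ B}).toReal)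
    (hπQ : ∀ y, πQ y = (Q {z | f z.1 ∈ B ∧ z.2 = y}).toReal / (Q {z | f z.1 ∈ B}).toReal) :
    ∀ y, πQ y = w y * πP y / ∑ j, w j * πP j := by
  intro y
  have hAm : MeasurableSet (f ⁻¹' B) := hf hB
  have hmeas : ∀ k : Fin K, MeasurableSet {z : 𝒳 × Fin K | f z.1 ∈ B ∧ z.2 = k} := by
    intro k
    exact ((hf.comp measurable_fst) hB).inter (measurable_snd (MeasurableSet.singleton k))
  -- key pointwise identity
  have key : ∀ k : Fin K, (Q {z : 𝒳 × Fin K | f z.1 ∈ B ∧ z.2 = k}).toReal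
      = w k * (P {z : 𝒳 × Fin K | f z.1 ∈ B ∧ z.2 = k}).toReal := by
    intro k
    by_cases hk : 0 < ql k
    · have hplk := hsupp k hk
      have h := hshift (f ⁻¹' B) hAm k hk
      rw [div_eq_div_iff (ne_of_gt hk) (ne_of_gt hplk)] at h
      rw [hw k]
      have : {z : 𝒳 × Fin K | z.1 ∈ f ⁻¹' B ∧ z.2 = k}
          = {z : 𝒳 × Fin K | f z.1 ∈ B ∧ z.2 = k} := rfl
      rw [this] at h
      field_simp
      linarith
    · have hkz : ql k = 0 :=
        le_antisymm (not_lt.mp hk) (by rw [hql k]; exact ENNReal.toReal_nonneg)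
    -- Q{z.2 = k} = 0
      have hQ0 : Q {z : 𝒳 × Fin K | z.2 = k} = 0 := by
        have := hql k
        rw [hkz] at this
        rcases (ENNReal.toReal_eq_zero_iff _).mp this.symm with h0 | h0
        · exact h0
        · exact absurd h0 (measure_ne_top Q _)
      have hsub : {z : 𝒳 × Fin K | f z.1 ∈ B ∧ z.2 = k} ⊆ {z : 𝒳 × Fin K | z.2 = k} :=
        fun z hz => hz.2
      have : Q {z : 𝒳 × Fin K | f z.1 ∈ B ∧ z.2 = k} = 0 :=
        le_antisymm (hQ0 ▸ measure_mono hsub) zero_le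
      rw [this, hw k, hkz]
      simp
  -- decomposition of the bin event
  have hcover : ∀ (μ : Measure (𝒳 × Fin K)) [IsProbabilityMeasure μ],
      (μ {z : 𝒳 × Fin K | f z.1 ∈ B}).toReal
        = ∑ j : Fin K, (μ {z : 𝒳 × Fin K | f z.1 ∈ B ∧ z.2 = j}).toReal := by
    intro μ _
    have hU : {z : 𝒳 × Fin K | f z.1 ∈ B}
        = ⋃ j : Fin K, {z : 𝒳 × Fin K | f z.1 ∈ B ∧ z.2 = j} := by
      ext z; simp
    have hdisj : Pairwise (Function.onFun Disjoint
        (fun j : Fin K => {z : 𝒳 × Fin K | f z.1 ∈ B ∧ z.2 = j})) := by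
      intro i j hij
      refine Set.disjoint_left.mpr ?_
      rintro z ⟨-, hzi⟩ ⟨-, hzj⟩
      exact hij (hzi ▸ hzj ▸ rfl)
    rw [hU, measure_iUnion hdisj hmeas, ENNReal.tsum_toReal_eq (fun j => measure_ne_top μ _),
      tsum_fintype]
  have hQsum : (Q {z : 𝒳 × Fin K | f z.1 ∈ B}).toReal
      = ∑ j : Fin K, w j * (P {z : 𝒳 × Fin K | f z.1 ∈ B ∧ z.2 = j}).toReal := by
    rw [hcover Q]; exact Finset.sum_congr rfl fun j _ => key j
  have hPBne : (P {z : 𝒳 × Fin K | f z.1 ∈ B}).toReal ≠ 0 := ne_of_gt hPB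
  have hQBne : (Q {z : 𝒳 × Fin K | f z.1 ∈ B}).toReal ≠ 0 := ne_of_gt hQB
  have hsumπ : ∑ j, w j * πP j
      = (Q {z : 𝒳 × Fin K | f z.1 ∈ B}).toReal / (P {z : 𝒳 × Fin K | f z.1 ∈ B}).toReal := by
    rw [hQsum, Finset.sum_div]
    exact Finset.sum_congr rfl fun j _ => by rw [hπP j, mul_div_assoc]
  rw [hπQ y, key y, hπP y, hsumπ, hQsum]
  field_simp
end

section
/- Let K ≥ 1 and let w : {1,...,K} → [0,∞) with w not identically zero, and set κ = (sup_k w(k)) / (inf_{k : w(k) ≠ 0} w(k)). Let π̂, π ∈ Δ_K be probability vectors with π supported only where w is nonzero, and define reweighted vectors T(v)_y = w(y)·v_y / Σ_k w(k)·v_k (assuming denominators positive for both π̂ and π). Then Σ_y |T(π̂)_y − T(π)_y| ≤ 2κ · Σ_y |π̂_y − π_y|. -/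
/-- Theorem 3, part (a): the ℓ1 distance between reweighted
probability vectors is at most 2κ times the ℓ1 distance between the originals. -/
theorem reweighting_stability
    (K : ℕ) [NeZero K] (w : Fin K → ℝ) (hw0 : ∀ j, 0 ≤ w j)
    (hwne : ∃ j, w j ≠ 0)
    (κ : ℝ) (hκ : κ = (⨆ j, w j) / sInf {x | ∃ j, w j = x ∧ x ≠ 0})
    (πh π : Fin K → ℝ)
    (hπh0 : ∀ y, 0 ≤ πh y) (hπh1 : ∑ y, πh y = 1)
    (hπ0 : ∀ y, 0 ≤ π y) (hπ1 : ∑ y, π y = 1)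
    (hsuppπ : ∀ y, w y = 0 → π y = 0)
    (hden1 : 0 < ∑ j, w j * πh j) (hden2 : 0 < ∑ j, w j * π j) :
    ∑ y, |w y * πh y / (∑ j, w j * πh j) - w y * π y / (∑ j, w j * π j)| ≤
      2 * κ * ∑ y, |πh y - π y| := by
  obtain ⟨j0, hj0⟩ := hwne
  set A := ∑ j, w j * πh j with hA
  set B := ∑ j, w j * π j with hB
  set M := ⨆ j, w j with hM
  set S : Set ℝ := {x | ∃ j, w j = x ∧ x ≠ 0} with hS
  set m := sInf S with hm
  have hSfin : S.Finite := (Set.finite_range w).subset (by rintro x ⟨j, hj, -⟩; exact ⟨j, hj⟩)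
  have hSne : S.Nonempty := ⟨w j0, j0, rfl, hj0⟩
  have hmmem : m ∈ S := hSne.csInf_mem hSfin
  have hm_pos : 0 < m := by
    obtain ⟨j, hj, hne⟩ := hmmem
    rw [← hj] at hne ⊢
    exact lt_of_le_of_ne (hw0 j) (Ne.symm hne)
  have hm_le : ∀ j, w j ≠ 0 → m ≤ w j := fun j hj =>
    csInf_le hSfin.bddBelow ⟨j, rfl, hj⟩
  have hle_M : ∀ j, w j ≤ M := fun j => le_ciSup (Set.finite_range w).bddAbove j
  have hM0 : 0 ≤ M := le_trans (hw0 j0) (hle_M j0)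
  have hmB : m ≤ B := by
    calc m = ∑ j, m * π j := by rw [← Finset.mul_sum, hπ1, mul_one]
    _ ≤ ∑ j, w j * π j := by
        refine Finset.sum_le_sum (fun j _ => ?_)
        by_cases h : w j = 0
        · simp [h, hsuppπ j h]
        · exact mul_le_mul_of_nonneg_right (hm_le j h) (hπ0 j)
  have hB_pos : 0 < B := hden2
  have hA_pos : 0 < A := hden1
  have key : ∀ y, |w y * πh y / A - w y * π y / B| ≤
      w y * πh y / A * (|B - A| / B) + w y * |πh y - π y| / B := by
    intro y
    have heq : w y * πh y / A - w y * π y / B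
        = w y * πh y / A * ((B - A) / B) + (w y * πh y - w y * π y) / B := by
      field_simp; ring
    rw [heq]
    refine (abs_add_le _ _).trans ?_
    have h1 : |w y * πh y / A * ((B - A) / B)| = w y * πh y / A * (|B - A| / B) := by
      rw [abs_mul, abs_of_nonneg (div_nonneg (mul_nonneg (hw0 y) (hπh0 y)) hA_pos.le),
        abs_div, abs_of_nonneg hB_pos.le]
    have h2 : |(w y * πh y - w y * π y) / B| = w y * |πh y - π y| / B := by
      rw [abs_div, abs_of_nonneg hB_pos.le, ← mul_sub, abs_mul, abs_of_nonneg (hw0 y)]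
    rw [h1, h2]
  have hsumA : ∑ y, w y * πh y / A = 1 := by
    rw [← Finset.sum_div, ← hA, div_self hA_pos.ne']
  have hBA : |B - A| ≤ M * ∑ y, |πh y - π y| := by
    have : B - A = ∑ y, w y * (π y - πh y) := by
      rw [hA, hB, ← Finset.sum_sub_distrib]; congr 1; ext y; ring
    rw [this]
    calc |∑ y, w y * (π y - πh y)| ≤ ∑ y, |w y * (π y - πh y)| := Finset.abs_sum_le_sum_abs _ _
      _ ≤ ∑ y, M * |πh y - π y| := by
          refine Finset.sum_le_sum (fun y _ => ?_)
          rw [abs_mul, abs_of_nonneg (hw0 y), abs_sub_comm]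
          exact mul_le_mul_of_nonneg_right (hle_M y) (abs_nonneg _)
      _ = M * ∑ y, |πh y - π y| := by rw [Finset.mul_sum]
  have hwsum : ∑ y, w y * |πh y - π y| ≤ M * ∑ y, |πh y - π y| := by
    rw [Finset.mul_sum]
    exact Finset.sum_le_sum (fun y _ => mul_le_mul_of_nonneg_right (hle_M y) (abs_nonneg _))
  calc ∑ y, |w y * πh y / A - w y * π y / B|
      ≤ ∑ y, (w y * πh y / A * (|B - A| / B) + w y * |πh y - π y| / B) :=
        Finset.sum_le_sum (fun y _ => key y)
    _ = |B - A| / B + (∑ y, w y * |πh y - π y|) / B := by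
        rw [Finset.sum_add_distrib, ← Finset.sum_mul, hsumA, one_mul, ← Finset.sum_div]
    _ ≤ (M * ∑ y, |πh y - π y|) / B + (M * ∑ y, |πh y - π y|) / B := by
        gcongr
    _ ≤ (M * ∑ y, |πh y - π y|) / m + (M * ∑ y, |πh y - π y|) / m := by
        have hnum : 0 ≤ M * ∑ y, |πh y - π y| :=
          mul_nonneg hM0 (Finset.sum_nonneg fun y _ => abs_nonneg _)
        gcongr <;> exact hm_pos
    _ = 2 * κ * ∑ y, |πh y - π y| := by
        rw [hκ]; field_simp; ring
end

section
/- Let K ≥ 1, let w, ŵ : {1,...,K} → [0,∞), and let π̂ ∈ Δ_K be a probability vector. Define for a weight function u the reweighted vector T_u(π̂)_y = u(y)·π̂_y / Σ_k u(k)·π̂_k, assuming both denominators Σ_k w(k)·π̂_k and Σ_k ŵ(k)·π̂_k are positive, and assume π̂ is supported only on {k : w(k) ≠ 0}. Then Σ_y |T_{ŵ}(π̂)_y − T_w(π̂)_y| ≤ 2·(max_y |ŵ(y) − w(y)|) / (inf_{l : w(l) ≠ 0} w(l)). -/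
/-- Theorem 3, part (b): the ℓ1 effect of using estimated weights ŵ
instead of true weights w is at most 2·max|ŵ−w| / inf_{w≠0} w. -/
theorem weight_estimation_error
    (K : ℕ) [NeZero K] (w wh : Fin K → ℝ) (hw0 : ∀ j, 0 ≤ w j) (hwh0 : ∀ j, 0 ≤ wh j)
    (hwne : ∃ j, w j ≠ 0)
    (πh : Fin K → ℝ) (hπh0 : ∀ y, 0 ≤ πh y) (hπh1 : ∑ y, πh y = 1)
    (hsupp : ∀ y, w y = 0 → πh y = 0)
    (hden1 : 0 < ∑ j, w j * πh j) (hden2 : 0 < ∑ j, wh j * πh j) :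
    ∑ y, |wh y * πh y / (∑ j, wh j * πh j) - w y * πh y / (∑ j, w j * πh j)| ≤
      2 * (⨆ y, |wh y - w y|) / sInf {x | ∃ l, w l = x ∧ x ≠ 0} := by
  set A := ∑ j, w j * πh j with hA
  set B := ∑ j, wh j * πh j with hB
  set ε := ⨆ y, |wh y - w y| with hεdef
  have hε : ∀ y, |wh y - w y| ≤ ε := fun y =>
    le_ciSup (f := fun y => |wh y - w y|) (Set.Finite.bddAbove (Set.finite_range _)) y
  have hε0 : 0 ≤ ε := le_trans (abs_nonneg _) (hε ⟨0, NeZero.pos K⟩)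
  set S := {x | ∃ l, w l = x ∧ x ≠ 0} with hS
  have hSsub : S ⊆ Set.range w := fun x hx => hx.imp fun l hl => hl.1
  have hSfin : S.Finite := (Set.finite_range w).subset hSsub
  have hSne : S.Nonempty := by obtain ⟨j, hj⟩ := hwne; exact ⟨w j, j, rfl, hj⟩
  set m := sInf S with hmdef
  have hmS : m ∈ S := hSne.csInf_mem hSfin
  have hm0 : 0 < m := by
    obtain ⟨l, hl, hne⟩ := hmS
    exact lt_of_le_of_ne (hl ▸ hw0 l) (Ne.symm hne)
  have hmle : ∀ y, w y ≠ 0 → m ≤ w y := fun y hy =>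
    csInf_le hSfin.bddBelow ⟨y, rfl, hy⟩
  have hmA : m ≤ A := by
    calc m = m * ∑ y, πh y := by rw [hπh1, mul_one]
    _ = ∑ y, m * πh y := by rw [Finset.mul_sum]
    _ ≤ ∑ y, w y * πh y := Finset.sum_le_sum fun y _ => by
        by_cases h : w y = 0
        · rw [hsupp y h]; simp
        · exact mul_le_mul_of_nonneg_right (hmle y h) (hπh0 y)
  have hsum_le : ∀ (u : Fin K → ℝ), (∀ y, |u y| ≤ ε) → |∑ y, u y * πh y| ≤ ε := by
    intro u hu
    calc |∑ y, u y * πh y| ≤ ∑ y, |u y * πh y| := Finset.abs_sum_le_sum_abs _ _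
    _ ≤ ∑ y, ε * πh y := Finset.sum_le_sum fun y _ => by
        rw [abs_mul, abs_of_nonneg (hπh0 y)]
        exact mul_le_mul_of_nonneg_right (hu y) (hπh0 y)
    _ = ε := by rw [← Finset.mul_sum, hπh1, mul_one]
  have hAB : |A - B| ≤ ε := by
    have h : A - B = ∑ y, (w y - wh y) * πh y := by
      rw [hA, hB, ← Finset.sum_sub_distrib]
      exact Finset.sum_congr rfl fun y _ => by ring
    rw [h]
    exact hsum_le _ fun y => by rw [abs_sub_comm]; exact hε y
  have hA0 : A ≠ 0 := ne_of_gt hden1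
  have hB0 : B ≠ 0 := ne_of_gt hden2
  have hterm : ∀ y, |wh y * πh y / B - w y * πh y / A| ≤
      wh y * πh y * |1/B - 1/A| + |wh y - w y| * πh y / A := by
    intro y
    have h1 : wh y * πh y / B - w y * πh y / A =
        wh y * πh y * (1/B - 1/A) + (wh y - w y) * πh y / A := by
      field_simp; ring
    rw [h1]
    calc |wh y * πh y * (1/B - 1/A) + (wh y - w y) * πh y / A|
        ≤ |wh y * πh y * (1/B - 1/A)| + |(wh y - w y) * πh y / A| := abs_add_le _ _
    _ = wh y * πh y * |1/B - 1/A| + |wh y - w y| * πh y / A := by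
        rw [abs_mul, abs_of_nonneg (mul_nonneg (hwh0 y) (hπh0 y)), abs_div, abs_mul,
          abs_of_nonneg (hπh0 y), abs_of_pos hden1]
  have hinv : |1/B - 1/A| = |A - B| / (A * B) := by
    have h2 : 1/B - 1/A = (A - B) / (A * B) := by
      rw [div_sub_div _ _ hB0 hA0, one_mul, mul_one, mul_comm B A]
    rw [h2, abs_div, abs_of_pos (mul_pos hden1 hden2)]
  have hmain : ∑ y, |wh y * πh y / B - w y * πh y / A| ≤ 2 * ε / A := by
    calc ∑ y, |wh y * πh y / B - w y * πh y / A|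
        ≤ ∑ y, (wh y * πh y * |1/B - 1/A| + |wh y - w y| * πh y / A) :=
          Finset.sum_le_sum fun y _ => hterm y
    _ = B * |1/B - 1/A| + (∑ y, |wh y - w y| * πh y) / A := by
          rw [Finset.sum_add_distrib, ← Finset.sum_mul, ← Finset.sum_div]
    _ ≤ B * (|A - B| / (A * B)) + ε / A := by
          rw [hinv]
          gcongr
          calc ∑ y, |wh y - w y| * πh y ≤ ∑ y, ε * πh y :=
                Finset.sum_le_sum fun y _ => mul_le_mul_of_nonneg_right (hε y) (hπh0 y)
          _ = ε := by rw [← Finset.mul_sum, hπh1, mul_one]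
    _ = |A - B| / A + ε / A := by
          congr 1
          field_simp
    _ ≤ ε / A + ε / A := by gcongr
    _ = 2 * ε / A := by ring
  refine hmain.trans ?_
  have h2ε : 0 ≤ 2 * ε := by linarith
  exact div_le_div_of_nonneg_left h2ε hm0 hmA
end

section
/- Let w : {1,...,K} → [0,∞), ŵ : {1,...,K} → [0,∞), and let π̂, π ∈ Δ_K be probability vectors supported on {k : w(k) ≠ 0}, with all relevant denominators positive. With T_u(v)_y = u(y)·v_y / Σ_k u(k)·v_k and κ = sup_k w(k) / inf_{k:w(k)≠0} w(k), it holds that Σ_y |T_{ŵ}(π̂)_y − T_w(π)_y| ≤ 2κ·Σ_y|π̂_y − π_y| + 2·max_y|ŵ(y)−w(y)| / inf_{l:w(l)≠0} w(l). -/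
lemma ratio_diff_bound {n : ℕ} (a b : Fin n → ℝ) (ha : ∀ y, 0 ≤ a y)
    (hA : 0 < ∑ j, a j) (hB : 0 < ∑ j, b j) :
    ∑ y, |a y / (∑ j, a j) - b y / (∑ j, b j)| ≤ 2 * (∑ y, |a y - b y|) / (∑ j, b j) := by
  set A := ∑ j, a j with hAdef
  set B := ∑ j, b j with hBdef
  set S := ∑ y, |a y - b y| with hS
  have hBA : |B - A| ≤ S := by
    have : B - A = ∑ y, (b y - a y) := by rw [hAdef, hBdef, Finset.sum_sub_distrib]
    rw [this]
    calc |∑ y, (b y - a y)| ≤ ∑ y, |b y - a y| := Finset.abs_sum_le_sum_abs _ _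
      _ = S := by simp [hS, abs_sub_comm]
  have key : ∀ y, |a y / A - b y / B| ≤ |a y - b y| / B + a y * (|B - A| / (A * B)) := by
    intro y
    have h1 : a y / A - b y / B = (a y - b y) / B + a y * ((B - A) / (A * B)) := by
      field_simp
      ring
    rw [h1]
    calc |(a y - b y) / B + a y * ((B - A) / (A * B))|
        ≤ |(a y - b y) / B| + |a y * ((B - A) / (A * B))| := abs_add_le _ _
      _ = |a y - b y| / B + a y * (|B - A| / (A * B)) := by
          rw [abs_div, abs_of_pos hB, abs_mul, abs_of_nonneg (ha y), abs_div,
            abs_of_pos (mul_pos hA hB)]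
  calc ∑ y, |a y / A - b y / B| ≤ ∑ y, (|a y - b y| / B + a y * (|B - A| / (A * B))) :=
        Finset.sum_le_sum fun y _ => key y
    _ = S / B + A * (|B - A| / (A * B)) := by
        rw [Finset.sum_add_distrib, ← Finset.sum_div, ← Finset.sum_mul]
    _ = S / B + |B - A| / B := by field_simp
    _ ≤ S / B + S / B := by gcongr
    _ = 2 * S / B := by ring

/-- Theorem 3: miscalibration of reweighted empirical frequencies
decomposes into a source-calibration term and a weight-estimation term. -/
theorem label_shift_miscalibration_bound
    (K : ℕ) [NeZero K] (w wh : Fin K → ℝ) (hw0 : ∀ j, 0 ≤ w j) (hwh0 : ∀ j, 0 ≤ wh j)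
    (hwne : ∃ j, w j ≠ 0)
    (κ : ℝ) (hκ : κ = (⨆ j, w j) / sInf {x | ∃ j, w j = x ∧ x ≠ 0})
    (πh π : Fin K → ℝ)
    (hπh0 : ∀ y, 0 ≤ πh y) (hπh1 : ∑ y, πh y = 1)
    (hπ0 : ∀ y, 0 ≤ π y) (hπ1 : ∑ y, π y = 1)
    (hsuppπh : ∀ y, w y = 0 → πh y = 0)
    (hsuppπ : ∀ y, w y = 0 → π y = 0)
    (hden1 : 0 < ∑ j, w j * πh j) (hden2 : 0 < ∑ j, w j * π j)
    (hden3 : 0 < ∑ j, wh j * πh j) :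
    ∑ y, |wh y * πh y / (∑ j, wh j * πh j) - w y * π y / (∑ j, w j * π j)| ≤
      2 * κ * (∑ y, |πh y - π y|) +
        2 * (⨆ y, |wh y - w y|) / sInf {x | ∃ l, w l = x ∧ x ≠ 0} := by
  -- basic facts about m := sInf of nonzero values of w
  set m := sInf {x | ∃ l, w l = x ∧ x ≠ 0} with hm
  have hSsub : {x | ∃ l, w l = x ∧ x ≠ 0} ⊆ Set.range w := by
    rintro x ⟨l, hl, -⟩; exact ⟨l, hl⟩
  have hSfin : {x | ∃ l, w l = x ∧ x ≠ 0}.Finite := (Set.finite_range w).subset hSsub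
  have hSne : {x | ∃ l, w l = x ∧ x ≠ 0}.Nonempty := by
    obtain ⟨j, hj⟩ := hwne; exact ⟨w j, j, rfl, hj⟩
  have hmmem : m ∈ {x | ∃ l, w l = x ∧ x ≠ 0} := hSne.csInf_mem hSfin
  have hmpos : 0 < m := by
    obtain ⟨l, hl, hne⟩ := hmmem
    exact lt_of_le_of_ne (hl ▸ hw0 l) (Ne.symm (hl ▸ hne))
  have hmle : ∀ y, w y ≠ 0 → m ≤ w y := fun y hy =>
    csInf_le (hSfin.bddBelow) ⟨y, rfl, hy⟩
  -- M := sup of w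
  set M := ⨆ j, w j with hM
  have hMle : ∀ y, w y ≤ M := fun y =>
    le_ciSup (Set.Finite.bddAbove (Set.finite_range w)) y
  -- D := sup of |wh - w|
  set D := ⨆ y, |wh y - w y| with hD
  have hDle : ∀ y, |wh y - w y| ≤ D := fun y =>
    le_ciSup (f := fun y => |wh y - w y|) (Set.Finite.bddAbove (Set.finite_range _)) y
  have hD0 : 0 ≤ D := le_trans (abs_nonneg _) (hDle ⟨0, Nat.pos_of_ne_zero (NeZero.ne K)⟩)
  -- denominators bounded below by m
  have hCm : m ≤ ∑ j, w j * πh j := by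
    calc m = ∑ j, m * πh j := by rw [← Finset.mul_sum, hπh1, mul_one]
      _ ≤ ∑ j, w j * πh j := by
          apply Finset.sum_le_sum
          intro j _
          by_cases hj : w j = 0
          · simp [hsuppπh j hj]
          · exact mul_le_mul_of_nonneg_right (hmle j hj) (hπh0 j)
  have hBm : m ≤ ∑ j, w j * π j := by
    calc m = ∑ j, m * π j := by rw [← Finset.mul_sum, hπ1, mul_one]
      _ ≤ ∑ j, w j * π j := by
          apply Finset.sum_le_sum
          intro j _
          by_cases hj : w j = 0
          · simp [hsuppπ j hj]
          · exact mul_le_mul_of_nonneg_right (hmle j hj) (hπ0 j)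
  have hC : 0 < ∑ j, w j * πh j := hden1
  -- triangle inequality through intermediate w*πh / C
  have htri : ∑ y, |wh y * πh y / (∑ j, wh j * πh j) - w y * π y / (∑ j, w j * π j)| ≤
      (∑ y, |wh y * πh y / (∑ j, wh j * πh j) - w y * πh y / (∑ j, w j * πh j)|) +
      (∑ y, |w y * πh y / (∑ j, w j * πh j) - w y * π y / (∑ j, w j * π j)|) := by
    rw [← Finset.sum_add_distrib]
    apply Finset.sum_le_sum
    intro y _
    exact abs_sub_le _ _ _
  have h1 : ∑ y, |wh y * πh y / (∑ j, wh j * πh j) - w y * πh y / (∑ j, w j * πh j)| ≤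
      2 * D / m := by
    have := ratio_diff_bound (fun y => wh y * πh y) (fun y => w y * πh y)
      (fun y => mul_nonneg (hwh0 y) (hπh0 y)) hden3 hden1
    refine le_trans this ?_
    have hS1 : (∑ y, |wh y * πh y - w y * πh y|) ≤ D := by
      calc (∑ y, |wh y * πh y - w y * πh y|) = ∑ y, |wh y - w y| * πh y := by
            apply Finset.sum_congr rfl
            intro y _
            rw [← sub_mul, abs_mul, abs_of_nonneg (hπh0 y)]
        _ ≤ ∑ y, D * πh y := Finset.sum_le_sum fun y _ =>
            mul_le_mul_of_nonneg_right (hDle y) (hπh0 y)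
        _ = D := by rw [← Finset.mul_sum, hπh1, mul_one]
    calc 2 * (∑ y, |wh y * πh y - w y * πh y|) / (∑ j, w j * πh j)
        ≤ 2 * D / (∑ j, w j * πh j) := by gcongr
      _ ≤ 2 * D / m := by gcongr
  have h2 : ∑ y, |w y * πh y / (∑ j, w j * πh j) - w y * π y / (∑ j, w j * π j)| ≤
      2 * κ * (∑ y, |πh y - π y|) := by
    have := ratio_diff_bound (fun y => w y * πh y) (fun y => w y * π y)
      (fun y => mul_nonneg (hw0 y) (hπh0 y)) hden1 hden2
    refine le_trans this ?_
    have hS2 : (∑ y, |w y * πh y - w y * π y|) ≤ M * (∑ y, |πh y - π y|) := by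
      rw [Finset.mul_sum]
      apply Finset.sum_le_sum
      intro y _
      rw [← mul_sub, abs_mul, abs_of_nonneg (hw0 y)]
      exact mul_le_mul_of_nonneg_right (hMle y) (abs_nonneg _)
    have hM0 : 0 ≤ M := le_trans (hw0 _) (hMle ⟨0, Nat.pos_of_ne_zero (NeZero.ne K)⟩)
    calc 2 * (∑ y, |w y * πh y - w y * π y|) / (∑ j, w j * π j)
        ≤ 2 * (M * (∑ y, |πh y - π y|)) / (∑ j, w j * π j) := by gcongr
      _ ≤ 2 * (M * (∑ y, |πh y - π y|)) / m := by gcongr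
      _ = 2 * κ * (∑ y, |πh y - π y|) := by
          rw [hκ]
          field_simp
  calc ∑ y, |wh y * πh y / (∑ j, wh j * πh j) - w y * π y / (∑ j, w j * π j)|
      ≤ (∑ y, |wh y * πh y / (∑ j, wh j * πh j) - w y * πh y / (∑ j, w j * πh j)|) +
        (∑ y, |w y * πh y / (∑ j, w j * πh j) - w y * π y / (∑ j, w j * π j)|) := htri
    _ ≤ 2 * D / m + 2 * κ * (∑ y, |πh y - π y|) := add_le_add h1 h2
    _ = 2 * κ * (∑ y, |πh y - π y|) + 2 * D / m := by ring
end

section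
/- Let X be a random variable, g a measurable function of X taking finitely many values, h a measurable function of g(X), and Y a random variable with values in a finite set. Fix a label y and suppose |P(Y=y | g(X)=m) − h_y(x)| ≤ ε for almost every x with g(x)=m, for all m. Then |P(Y=y | h(X)) − h_y(X)| ≤ ε almost surely. -/
open MeasureTheory ProbabilityTheory

/-- if a predictor H∘G is within ε of the bin-conditional class
probabilities on every bin of positive probability, then it is ε-calibrated:
|P(Y=y | H(G)) − H(G)_y| ≤ ε almost surely. -/
theorem binwise_accuracy_implies_calibration
    {Ω : Type*} [MeasurableSpace Ω] (μ : Measure Ω) [IsProbabilityMeasure μ]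
    (M K : ℕ) (G : Ω → Fin M) (hG : Measurable G)
    (Y : Ω → Fin K) (hY : Measurable Y)
    (H : Fin M → Fin K → ℝ) (y : Fin K) (ε : ℝ) (hε : 0 ≤ ε)
    (hbin : ∀ m, μ {ω | G ω = m} ≠ 0 →
      |(μ {ω | Y ω = y ∧ G ω = m}).toReal / (μ {ω | G ω = m}).toReal - H m y| ≤ ε) :
    ∀ᵐ ω ∂μ,
      |(μ[(fun ω' => if Y ω' = y then (1 : ℝ) else 0) |
          MeasurableSpace.comap (fun ω' => H (G ω')) inferInstance]) ω - H (G ω) y| ≤ ε := by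
  classical
  have hH : Measurable H := measurable_of_countable H
  set T : Ω → (Fin K → ℝ) := fun ω => H (G ω) with hTdef
  have hT : Measurable T := hH.comp hG
  have hm : MeasurableSpace.comap T inferInstance ≤ ‹MeasurableSpace Ω› := hT.comap_le
  haveI : SigmaFinite (μ.trim hm) := inferInstance
  -- atoms of G
  have hBmeas : ∀ m : Fin M, MeasurableSet {ω | G ω = m} :=
    fun m => hG (measurableSet_singleton m)
  have hYmeas : MeasurableSet {ω | Y ω = y} := hY (measurableSet_singleton y)
  have hAmeas : ∀ v : Fin K → ℝ, MeasurableSet {ω | T ω = v} :=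
    fun v => hT (measurableSet_singleton v)
  -- candidate function
  set φ : (Fin K → ℝ) → ℝ :=
    fun v => (μ {ω | Y ω = y ∧ T ω = v}).toReal / (μ {ω | T ω = v}).toReal with hφdef
  set f : Ω → ℝ := fun ω => φ (T ω) with hfdef
  set g : Ω → ℝ := fun ω' => if Y ω' = y then (1 : ℝ) else 0 with hgdef
  -- subset facts
  have hPQ : ∀ v, μ {ω | Y ω = y ∧ T ω = v} ≤ μ {ω | T ω = v} :=
    fun v => measure_mono (fun ω hω => hω.2)
  have hfin : ∀ s : Set Ω, μ s ≠ ⊤ := fun s => measure_ne_top μ s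
  -- fiber decomposition of T-atoms
  have hfiber : ∀ v : Fin K → ℝ,
      {ω | T ω = v} = ⋃ m ∈ Finset.univ.filter (fun m => H m = v), {ω | G ω = m} := by
    intro v
    ext ω
    simp only [Set.mem_setOf_eq, Set.mem_iUnion, Finset.mem_filter, Finset.mem_univ, true_and]
    constructor
    · intro h; exact ⟨G ω, h, rfl⟩
    · rintro ⟨m, hmv, rfl⟩; exact hmv
  have hfiberY : ∀ v : Fin K → ℝ,
      {ω | Y ω = y ∧ T ω = v}
        = ⋃ m ∈ Finset.univ.filter (fun m => H m = v), {ω | Y ω = y ∧ G ω = m} := by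
    intro v
    ext ω
    simp only [Set.mem_setOf_eq, Set.mem_iUnion, Finset.mem_filter, Finset.mem_univ, true_and]
    constructor
    · rintro ⟨h1, h2⟩; exact ⟨G ω, h2, h1, rfl⟩
    · rintro ⟨m, hmv, h1, rfl⟩; exact ⟨h1, hmv⟩
  have hdisj : ∀ (F : Finset (Fin M)),
      Set.PairwiseDisjoint (↑F) (fun m => {ω | G ω = m}) := by
    intro F m _ m' _ hne
    refine Set.disjoint_left.2 fun ω h1 h2 => hne ?_
    simp only [Set.mem_setOf_eq] at h1 h2
    rw [← h1, ← h2]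
  have hdisjY : ∀ (F : Finset (Fin M)),
      Set.PairwiseDisjoint (↑F) (fun m => {ω | Y ω = y ∧ G ω = m}) := by
    intro F m _ m' _ hne
    refine Set.disjoint_left.2 fun ω h1 h2 => hne ?_
    rw [← h1.2, ← h2.2]
  have hQsum : ∀ v : Fin K → ℝ, μ {ω | T ω = v}
      = ∑ m ∈ Finset.univ.filter (fun m => H m = v), μ {ω | G ω = m} := by
    intro v
    rw [hfiber v, measure_biUnion_finset (hdisj _) (fun m _ => hBmeas m)]
  have hPsum : ∀ v : Fin K → ℝ, μ {ω | Y ω = y ∧ T ω = v}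
      = ∑ m ∈ Finset.univ.filter (fun m => H m = v), μ {ω | Y ω = y ∧ G ω = m} := by
    intro v
    rw [hfiberY v, measure_biUnion_finset (hdisjY _)
      (fun m _ => (hYmeas.inter (hBmeas m)).congr (by ext ω; simp [Set.mem_setOf_eq]))]
  -- key pointwise inequality
  have hkey : ∀ v : Fin K → ℝ, μ {ω | T ω = v} ≠ 0 → |φ v - v y| ≤ ε := by
    intro v hQ0
    set F := Finset.univ.filter (fun m : Fin M => H m = v) with hF
    have hQr : (μ {ω | T ω = v}).toReal = ∑ m ∈ F, (μ {ω | G ω = m}).toReal := by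
      rw [hQsum v, ENNReal.toReal_sum (fun m _ => hfin _)]
    have hPr : (μ {ω | Y ω = y ∧ T ω = v}).toReal
        = ∑ m ∈ F, (μ {ω | Y ω = y ∧ G ω = m}).toReal := by
      rw [hPsum v, ENNReal.toReal_sum (fun m _ => hfin _)]
    have hQpos : 0 < (μ {ω | T ω = v}).toReal :=
      ENNReal.toReal_pos hQ0 (hfin _)
    have hterm : ∀ m ∈ F,
        |(μ {ω | Y ω = y ∧ G ω = m}).toReal - v y * (μ {ω | G ω = m}).toReal|
          ≤ ε * (μ {ω | G ω = m}).toReal := by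
      intro m hmF
      have hHv : H m = v := (Finset.mem_filter.1 hmF).2
      by_cases hq : μ {ω | G ω = m} = 0
      · have hp : μ {ω | Y ω = y ∧ G ω = m} = 0 :=
          le_antisymm (le_trans (measure_mono fun ω hω => hω.2) hq.le) zero_le
        simp [hp, hq]
      · have hqr : 0 < (μ {ω | G ω = m}).toReal := ENNReal.toReal_pos hq (hfin _)
        have := hbin m hq
        rw [hHv] at this
        have h2 : ((μ {ω | Y ω = y ∧ G ω = m}).toReal / (μ {ω | G ω = m}).toReal - v y)
            * (μ {ω | G ω = m}).toReal
            = (μ {ω | Y ω = y ∧ G ω = m}).toReal - v y * (μ {ω | G ω = m}).toReal := by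
          field_simp
        calc |(μ {ω | Y ω = y ∧ G ω = m}).toReal - v y * (μ {ω | G ω = m}).toReal|
            = |(μ {ω | Y ω = y ∧ G ω = m}).toReal / (μ {ω | G ω = m}).toReal - v y|
              * (μ {ω | G ω = m}).toReal := by
              rw [← h2, abs_mul, abs_of_pos hqr]
          _ ≤ ε * (μ {ω | G ω = m}).toReal :=
              mul_le_mul_of_nonneg_right this hqr.le
    have hmain : |(μ {ω | Y ω = y ∧ T ω = v}).toReal
        - v y * (μ {ω | T ω = v}).toReal| ≤ ε * (μ {ω | T ω = v}).toReal := by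
      rw [hQr, hPr, Finset.mul_sum, ← Finset.sum_sub_distrib, Finset.mul_sum]
      exact le_trans (Finset.abs_sum_le_sum_abs _ _) (Finset.sum_le_sum hterm)
    have hEq : φ v - v y
        = ((μ {ω | Y ω = y ∧ T ω = v}).toReal
            - v y * (μ {ω | T ω = v}).toReal) / (μ {ω | T ω = v}).toReal := by
      simp only [hφdef]
      field_simp
    rw [hEq, abs_div, abs_of_pos hQpos, div_le_iff₀ hQpos]
    exact hmain
  -- f is comap-measurable
  have hf_meas' : Measurable[MeasurableSpace.comap T inferInstance] f := by
    intro B hB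
    refine ⟨φ ⁻¹' B ∩ Set.range H, ?_, ?_⟩
    · exact ((Set.finite_range H).subset Set.inter_subset_right).measurableSet
    · ext ω
      simp only [Set.mem_preimage, Set.mem_inter_iff, Set.mem_range, hfdef]
      exact ⟨fun ⟨h1, _⟩ => h1, fun h1 => ⟨h1, ⟨G ω, rfl⟩⟩⟩
  have hf_meas : Measurable f := hf_meas'.mono hm le_rfl
  have hf_bdd : ∀ ω, ‖f ω‖ ≤ 1 := by
    intro ω
    rw [Real.norm_eq_abs, hfdef, hφdef]
    rcases eq_or_ne (μ {ω' | T ω' = T ω}) 0 with h0 | h0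
    · have hp : μ {ω' | Y ω' = y ∧ T ω' = T ω} = 0 :=
        le_antisymm (le_trans (hPQ _) h0.le) zero_le
      simp [hp, hε.trans, h0]
    · rw [abs_of_nonneg (div_nonneg ENNReal.toReal_nonneg ENNReal.toReal_nonneg)]
      rw [div_le_one (ENNReal.toReal_pos h0 (hfin _))]
      exact ENNReal.toReal_mono (hfin _) (hPQ _)
  have hf_int : Integrable f μ := by
    refine (integrable_const (1 : ℝ)).mono' hf_meas.aestronglyMeasurable ?_
    filter_upwards with ω using hf_bdd ω
  have hg_meas : Measurable g := by
    exact Measurable.ite (hY (measurableSet_singleton y)) measurable_const measurable_const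
  have hg_int : Integrable g μ := by
    refine (integrable_const (1 : ℝ)).mono' hg_meas.aestronglyMeasurable ?_
    filter_upwards with ω
    by_cases h : Y ω = y <;> simp [hgdef, h]
  -- per-atom integral identities
  have hatom_f : ∀ v : Fin K → ℝ,
      ∫ ω in {ω | T ω = v}, f ω ∂μ = (μ {ω | T ω = v}).toReal * φ v := by
    intro v
    rw [setIntegral_congr_fun (hAmeas v) (fun ω hω => by
      show φ (T ω) = φ v; rw [hω]), setIntegral_const, smul_eq_mul, measureReal_def]
  have hatom_g : ∀ v : Fin K → ℝ,
      ∫ ω in {ω | T ω = v}, g ω ∂μ = (μ {ω | Y ω = y ∧ T ω = v}).toReal := by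
    intro v
    have : ∀ ω, g ω = Set.indicator {ω' | Y ω' = y} (fun _ => (1 : ℝ)) ω := by
      intro ω; rw [hgdef, Set.indicator_apply]; rfl
    rw [setIntegral_congr_fun (hAmeas v) (fun ω _ => this ω),
      setIntegral_indicator hYmeas, setIntegral_const, smul_eq_mul, mul_one, measureReal_def]
    congr 1
    congr 1
    ext ω
    simp only [Set.mem_inter_iff, Set.mem_setOf_eq]
    tauto
  have hatom_fg : ∀ v : Fin K → ℝ,
      ∫ ω in {ω | T ω = v}, f ω ∂μ = ∫ ω in {ω | T ω = v}, g ω ∂μ := by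
    intro v
    rw [hatom_f v, hatom_g v]
    rcases eq_or_ne (μ {ω | T ω = v}) 0 with h0 | h0
    · have hp : μ {ω | Y ω = y ∧ T ω = v} = 0 :=
        le_antisymm (le_trans (hPQ _) h0.le) zero_le
      simp [h0, hp]
    · have hQpos := ENNReal.toReal_pos h0 (hfin _)
      simp only [hφdef]
      rw [mul_comm, div_mul_cancel₀ _ hQpos.ne']
  -- set-integral equality on the comap σ-algebra
  have hset_eq : ∀ s : Set Ω, MeasurableSet[MeasurableSpace.comap T inferInstance] s →
      μ s < ⊤ → ∫ ω in s, f ω ∂μ = ∫ ω in s, g ω ∂μ := by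
    rintro s ⟨S, hS, rfl⟩ _
    set V : Finset (Fin K → ℝ) :=
      (Finset.univ.image H).filter (fun v => v ∈ S) with hV
    have hs_eq : T ⁻¹' S = ⋃ v ∈ V, {ω | T ω = v} := by
      ext ω
      simp only [Set.mem_preimage, Set.mem_iUnion, Finset.mem_filter, Finset.mem_image,
        Finset.mem_univ, true_and, Set.mem_setOf_eq, hV]
      constructor
      · intro h; exact ⟨T ω, ⟨⟨G ω, rfl⟩, h⟩, rfl⟩
      · rintro ⟨v, ⟨_, hvS⟩, rfl⟩; exact hvS
    have hdisjT : Set.Pairwise (↑V) (Function.onFun Disjoint fun v => {ω | T ω = v}) := by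
      intro v _ v' _ hne
      refine Set.disjoint_left.2 fun ω h1 h2 => hne ?_
      rw [← h1, ← h2]
    rw [hs_eq,
      integral_biUnion_finset V (fun v _ => hAmeas v) hdisjT (fun v _ => hf_int.integrableOn),
      integral_biUnion_finset V (fun v _ => hAmeas v) hdisjT (fun v _ => hg_int.integrableOn)]
    exact Finset.sum_congr rfl fun v _ => hatom_fg v
  -- identify f with the conditional expectation
  have hf_ae : f =ᵐ[μ] μ[g | MeasurableSpace.comap T inferInstance] := by
    refine ae_eq_condExp_of_forall_setIntegral_eq hm hg_int
      (fun s _ _ => hf_int.integrableOn) (fun s hs hμs => hset_eq s hs hμs) ?_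
    exact StronglyMeasurable.aestronglyMeasurable
      (Measurable.stronglyMeasurable hf_meas')
  -- a.e. every point lies in a G-atom of positive measure
  have hpos : ∀ᵐ ω ∂μ, ∀ m : Fin M, μ {ω' | G ω' = m} = 0 → G ω ≠ m := by
    rw [ae_all_iff]
    intro m
    by_cases h0 : μ {ω' | G ω' = m} = 0
    · have : ∀ᵐ ω ∂μ, G ω ≠ m := by
        rw [ae_iff]
        simpa using h0
      filter_upwards [this] with ω hω _ using hω
    · filter_upwards with ω h using absurd h h0
  filter_upwards [hpos, hf_ae] with ω hω hfω
  rw [← hfω]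
  have hQ0 : μ {ω' | T ω' = T ω} ≠ 0 := by
    intro h0
    have hsub : {ω' | G ω' = G ω} ⊆ {ω' | T ω' = T ω} := by
      intro ω' h
      show H (G ω') = H (G ω)
      rw [h]
    have : μ {ω' | G ω' = G ω} = 0 :=
      le_antisymm (le_trans (measure_mono hsub) h0.le) zero_le
    exact hω (G ω) this rfl
  exact hkey (T ω) hQ0
end

section
/- Let π ∈ Δ_K have distinct positive entries, ρ_y = Σ_{y'} π_{y'}·1{π_{y'} > π_y}, and let U ~ Uniform[0,1]. If Y is a random label drawn according to π, independent considerations give: the random score R = ρ_Y + U·π_Y is uniformly distributed on [0,1]. -/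
open MeasureTheory ProbabilityTheory

lemma tiling_step (c T a : ℝ) (hc : 0 < c) (hT : 0 ≤ T) :
    min c (max 0 a) + min T (max 0 (a - c)) = min (c + T) (max 0 a) := by
  simp only [min_def, max_def]
  split_ifs <;> linarith

lemma tiling {α : Type*} [DecidableEq α] (w : α → ℝ) :
    ∀ (s : Finset α), (∀ y ∈ s, 0 < w y) → (Set.InjOn w s) → ∀ a : ℝ,
    ∑ y ∈ s, min (w y) (max 0 (a - ∑ y' ∈ s.filter (fun y' => w y < w y'), w y'))
      = min (∑ y ∈ s, w y) (max 0 a) := by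
  intro s
  induction s using Finset.strongInduction with
  | _ s ih =>
    intro hpos hinj a
    rcases s.eq_empty_or_nonempty with rfl | hne
    · simp
    · obtain ⟨m, hm, hmax⟩ := s.exists_max_image w hne
      set t := s.erase m with ht
      have hmt : m ∉ t := Finset.notMem_erase m s
      have hs : s = insert m t := (Finset.insert_erase hm).symm
      have hts : t ⊆ s := Finset.erase_subset m s
      have hlt : ∀ y ∈ t, w y < w m := by
        intro y hy
        have hys : y ∈ s := hts hy
        have hne' : w y ≠ w m := fun h => (Finset.ne_of_mem_erase hy) (hinj hys hm h)
        exact lt_of_le_of_ne (hmax y hys) hne'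
      have hρm : s.filter (fun y' => w m < w y') = ∅ := by
        apply Finset.filter_eq_empty_iff.mpr
        intro y hy
        exact not_lt.mpr (hmax y hy)
      have hfilt : ∀ y ∈ t, s.filter (fun y' => w y < w y')
          = insert m (t.filter (fun y' => w y < w y')) := by
        intro y hy
        rw [hs, Finset.filter_insert, if_pos (hlt y hy)]
      have hsum : ∀ y ∈ t, ∑ y' ∈ s.filter (fun y' => w y < w y'), w y'
          = w m + ∑ y' ∈ t.filter (fun y' => w y < w y'), w y' := by
        intro y hy
        rw [hfilt y hy, Finset.sum_insert (fun h => hmt (Finset.mem_of_mem_filter m h))]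
      have hih := ih t (by rw [hs]; exact Finset.ssubset_insert hmt)
        (fun y hy => hpos y (hts hy)) (hinj.mono (by exact_mod_cast Finset.coe_subset.mpr hts))
        (a - w m)
      rw [hs, Finset.sum_insert hmt, Finset.sum_insert hmt]
      rw [← hs, hρm]
      have : ∀ y ∈ t, min (w y) (max 0 (a - ∑ y' ∈ s.filter (fun y' => w y < w y'), w y'))
          = min (w y) (max 0 ((a - w m) - ∑ y' ∈ t.filter (fun y' => w y < w y'), w y')) := by
        intro y hy
        rw [hsum y hy]; ring_nf
      rw [Finset.sum_congr rfl this, hih]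
      simp only [Finset.sum_empty, sub_zero]
      exact tiling_step (w m) (∑ y ∈ t, w y) a (hpos m hm)
        (Finset.sum_nonneg fun y hy => (hpos y (hts hy)).le)

/-- with Y ~ π, U ~ Unif[0,1] independent, the randomized conformal
score R = ρ_Y + U·π_Y is uniformly distributed on [0,1]. -/
theorem randomized_score_uniform
    {Ω : Type*} [MeasurableSpace Ω] (μ : Measure Ω) [IsProbabilityMeasure μ]
    (K : ℕ) (π : Fin K → ℝ) (hπ0 : ∀ y, 0 < π y) (hπ1 : ∑ y, π y = 1)
    (hdist : Function.Injective π)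
    (ρ : Fin K → ℝ) (hρ : ∀ y, ρ y = ∑ y', if π y < π y' then π y' else 0)
    (Y : Ω → Fin K) (hY : Measurable Y) (U : Ω → ℝ) (hU : Measurable U)
    (hYlaw : ∀ y, μ {ω | Y ω = y} = ENNReal.ofReal (π y))
    (hUlaw : Measure.map U μ = volume.restrict (Set.Icc (0 : ℝ) 1))
    (hindep : IndepFun Y U μ) :
    Measure.map (fun ω => ρ (Y ω) + U ω * π (Y ω)) μ
      = volume.restrict (Set.Icc (0 : ℝ) 1) := by
  have hR : Measurable (fun ω => ρ (Y ω) + U ω * π (Y ω)) :=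
    ((measurable_of_countable ρ).comp hY).add
      (hU.mul ((measurable_of_countable π).comp hY))
  haveI : IsProbabilityMeasure (Measure.map (fun ω => ρ (Y ω) + U ω * π (Y ω)) μ) :=
    Measure.isProbabilityMeasure_map hR.aemeasurable
  haveI : IsProbabilityMeasure (volume.restrict (Set.Icc (0 : ℝ) 1)) := by
    constructor
    rw [Measure.restrict_apply_univ]
    simp [Real.volume_Icc]
  refine Measure.ext_of_Iic _ _ (fun a => ?_)
  rw [Measure.map_apply hR measurableSet_Iic]
  -- decompose by value of Y
  have hset : (fun ω => ρ (Y ω) + U ω * π (Y ω)) ⁻¹' Set.Iic a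
      = ⋃ y : Fin K, (Y ⁻¹' {y} ∩ U ⁻¹' Set.Iic ((a - ρ y) / π y)) := by
    ext ω
    simp only [Set.mem_preimage, Set.mem_Iic, Set.mem_iUnion, Set.mem_inter_iff,
      Set.mem_singleton_iff]
    constructor
    · intro h
      exact ⟨Y ω, rfl, (le_div_iff₀ (hπ0 (Y ω))).mpr (by linarith)⟩
    · rintro ⟨y, hy, h⟩
      rw [hy]
      have := (le_div_iff₀ (hπ0 y)).mp h
      linarith
  rw [hset, measure_iUnion ?_ ?_]
  rotate_left
  · intro i j hij
    simp only [Set.disjoint_left]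
    rintro ω ⟨h1, -⟩ ⟨h2, -⟩
    exact hij (h1.symm.trans h2)
  · intro y
    exact ((hY (measurableSet_singleton y)).inter (hU measurableSet_Iic))
  have hterm : ∀ y : Fin K,
      μ (Y ⁻¹' {y} ∩ U ⁻¹' Set.Iic ((a - ρ y) / π y))
        = ENNReal.ofReal (min (π y) (max 0 (a - ρ y))) := by
    intro y
    rw [hindep.measure_inter_preimage_eq_mul _ _ (measurableSet_singleton y) measurableSet_Iic]
    have h1 : μ (Y ⁻¹' {y}) = ENNReal.ofReal (π y) := by
      rw [← hYlaw y]; rfl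
    have h2 : μ (U ⁻¹' Set.Iic ((a - ρ y) / π y))
        = ENNReal.ofReal (min ((a - ρ y) / π y) 1) := by
      rw [← Measure.map_apply hU measurableSet_Iic, hUlaw,
        Measure.restrict_apply measurableSet_Iic]
      have : Set.Iic ((a - ρ y) / π y) ∩ Set.Icc (0:ℝ) 1
          = Set.Icc 0 (min ((a - ρ y) / π y) 1) := by
        ext x
        simp only [Set.mem_inter_iff, Set.mem_Iic, Set.mem_Icc, le_min_iff]
        tauto
      rw [this, Real.volume_Icc, sub_zero]
    rw [h1, h2, ← ENNReal.ofReal_mul (hπ0 y).le]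
    have hpy := hπ0 y
    have hmul : π y * min ((a - ρ y) / π y) 1 = min (π y) (a - ρ y) := by
      rw [mul_min_of_nonneg _ _ hpy.le, mul_div_cancel₀ _ hpy.ne', mul_one, min_comm]
    rw [hmul]
    rcases le_total 0 (a - ρ y) with h | h
    · rw [max_eq_right h]
    · rw [max_eq_left h, min_eq_right (h.trans hpy.le), min_eq_right hpy.le,
        ENNReal.ofReal_eq_zero.mpr h, ENNReal.ofReal_zero]
  rw [tsum_fintype, Finset.sum_congr rfl (fun y _ => hterm y),
    ← ENNReal.ofReal_sum_of_nonneg (fun y _ => le_min (hπ0 y).le (le_max_left 0 _))]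
  have hρ' : ∀ y, ρ y = ∑ y' ∈ Finset.univ.filter (fun y' => π y < π y'), π y' := by
    intro y
    rw [hρ y, Finset.sum_filter]
  have htile := tiling π Finset.univ (fun y _ => hπ0 y)
    (hdist.injOn) a
  have : ∑ y : Fin K, min (π y) (max 0 (a - ρ y)) = min 1 (max 0 a) := by
    rw [← hπ1]
    rw [← htile]
    exact Finset.sum_congr rfl (fun y _ => by rw [hρ' y])
  rw [this]
  -- RHS
  rw [Measure.restrict_apply measurableSet_Iic]
  have hIcc : Set.Iic a ∩ Set.Icc (0:ℝ) 1 = Set.Icc 0 (min a 1) := by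
    ext x
    simp only [Set.mem_inter_iff, Set.mem_Iic, Set.mem_Icc, le_min_iff]
    tauto
  rw [hIcc, Real.volume_Icc, sub_zero]
  rcases le_total 0 a with h | h
  · rw [max_eq_right h, min_comm]
  · rw [max_eq_left h, min_eq_right zero_le_one, min_eq_left (by linarith : a ≤ 1),
      ENNReal.ofReal_eq_zero.mpr h, ENNReal.ofReal_zero]
end
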